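/- Let 𝕏ᵈ ⊆ ℝⁿ, Y ⊆ ℝⁿ, Z ⊆ ℝⁿ be finite nonempty sets, W ⊆ ℝⁿ a finite nonempty set with p : W → ℝ satisfying p(w) ≥ 0 and Σ_{w∈W} p(w) = 1, γ ∈ (0,1), f_s : ℝⁿ → ℝⁿ, C_s : ℝⁿ → ℝ, and g : ℝⁿ → ℝ any function. Let L be a map sending each J : 𝕏ᵈ → ℝ to L J : ℝⁿ → ℝ such that for all J₁, J₂ : 𝕏ᵈ → ℝ and all z ∈ ℝⁿ, |L J₁(z) − L J₂(z)| ≤ max_{x∈𝕏ᵈ} |J₁(x) − J₂(x)| (a non-expansive extension). Let E be a map sending each h : Z → ℝ to E h : ℝⁿ → ℝ such that for all h₁, h₂ : Z → ℝ and all z ∈ ℝⁿ, |E h₁(z) − E h₂(z)| ≤ max_{z'∈Z} |h₁(z') − h₂(z')|. For J : 𝕏ᵈ → ℝ define: ε_J(x) := γ · Σ_{w∈W} p(w) · (L J)(x + w) for x ∈ 𝕏ᵈ; ϕ_J(y) := g(y) + max_{x∈𝕏ᵈ} (⟨x, y⟩ − ε_J(x)) for y ∈ Y; h_J(z) := max_{y∈Y}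 (⟨y, z⟩ − ϕ_J(y)) for z ∈ Z; and T̂ᵈ J(x) := C_s(x) + (E h_J)(f_s(x)) for x ∈ 𝕏ᵈ. Then T̂ᵈ is γ-contractive in the sup norm: for all J₁, J₂ : 𝕏ᵈ → ℝ, max_{x∈𝕏ᵈ} |T̂ᵈ J₁(x) − T̂ᵈ J₂(x)| ≤ γ · max_{x∈𝕏ᵈ} |J₁(x) − J₂(x)|. -/

import Mathlib

open scoped RealInnerProductSpace

private lemma abs_sup'_sub_sup'_le' {α : Type*} (s : Finset α) (hs : s.Nonempty)
    (f g : α → ℝ) (c : ℝ) (h : ∀ i ∈ s, |f i - g i| ≤ c) :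
    |s.sup' hs f - s.sup' hs g| ≤ c := by
  rw [abs_sub_le_iff]
  constructor <;> rw [sub_le_iff_le_add] <;> apply Finset.sup'_le <;> intro i hi
  · have h1 := (abs_sub_le_iff.mp (h i hi)).1
    have h2 := Finset.le_sup' g hi
    linarith
  · have h1 := (abs_sub_le_iff.mp (h i hi)).2
    have h2 := Finset.le_sup' f hi
    linarith

/-- Theorem 3.4 (convergence of ConjVI): the discrete conjugate DP operator `T̂ᵈ`, built
from a non-expansive extension `L` of the value function, a scaled expectation over the
finite disturbance set `W`, two discrete conjugations over the dual grid `Y` and the grid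
`Z`, a fixed additive term `g`, and a non-expansive extension `E` evaluated at `f_s(x)`,
is a `γ`-contraction in the sup norm on functions `𝕏ᵈ → ℝ`. -/
theorem dCDP_contraction {n : ℕ}
    (Xd Y Z W : Finset (EuclideanSpace ℝ (Fin n)))
    (hXd : Xd.Nonempty) (hY : Y.Nonempty) (hZ : Z.Nonempty) (hW : W.Nonempty)
    (p : EuclideanSpace ℝ (Fin n) → ℝ)
    (hp : ∀ w ∈ W, 0 ≤ p w) (hpsum : ∑ w ∈ W, p w = 1)
    (γ : ℝ) (hγ0 : 0 < γ) (hγ1 : γ < 1)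
    (fs : EuclideanSpace ℝ (Fin n) → EuclideanSpace ℝ (Fin n))
    (Cs g : EuclideanSpace ℝ (Fin n) → ℝ)
    (L : ({x // x ∈ Xd} → ℝ) → EuclideanSpace ℝ (Fin n) → ℝ)
    (hL : ∀ (J₁ J₂ : {x // x ∈ Xd} → ℝ) (z : EuclideanSpace ℝ (Fin n)),
      |L J₁ z - L J₂ z| ≤
        Xd.attach.sup' (Finset.attach_nonempty_iff.mpr hXd) (fun x => |J₁ x - J₂ x|))
    (E : ({z // z ∈ Z} → ℝ) → EuclideanSpace ℝ (Fin n) → ℝ)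
    (hE : ∀ (h₁ h₂ : {z // z ∈ Z} → ℝ) (ζ : EuclideanSpace ℝ (Fin n)),
      |E h₁ ζ - E h₂ ζ| ≤
        Z.attach.sup' (Finset.attach_nonempty_iff.mpr hZ) (fun z' => |h₁ z' - h₂ z'|))
    (T : ({x // x ∈ Xd} → ℝ) → {x // x ∈ Xd} → ℝ)
    (hT : ∀ (J : {x // x ∈ Xd} → ℝ) (x : {x // x ∈ Xd}),
      T J x = Cs (x : EuclideanSpace ℝ (Fin n)) +
        E (fun z => Y.sup' hY (fun y => ⟪y, (z : EuclideanSpace ℝ (Fin n))⟫ -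
              (g y + Xd.sup' hXd (fun x' =>
                ⟪x', y⟫ - γ * ∑ w ∈ W, p w * L J (x' + w)))))
          (fs (x : EuclideanSpace ℝ (Fin n)))) :
    ∀ J₁ J₂ : {x // x ∈ Xd} → ℝ,
      Xd.attach.sup' (Finset.attach_nonempty_iff.mpr hXd) (fun x => |T J₁ x - T J₂ x|) ≤
        γ * Xd.attach.sup' (Finset.attach_nonempty_iff.mpr hXd) (fun x => |J₁ x - J₂ x|) := by
  intro J₁ J₂
  set M := Xd.attach.sup' (Finset.attach_nonempty_iff.mpr hXd) (fun x => |J₁ x - J₂ x|) with hM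
  -- Step 1: L difference bounded by M
  have hLM : ∀ z, |L J₁ z - L J₂ z| ≤ M := fun z => hL J₁ J₂ z
  -- Step 2: expectation term difference bounded by γM
  have hε : ∀ x' : EuclideanSpace ℝ (Fin n),
      |(γ * ∑ w ∈ W, p w * L J₁ (x' + w)) - γ * ∑ w ∈ W, p w * L J₂ (x' + w)| ≤ γ * M := by
    intro x'
    rw [← mul_sub, abs_mul, abs_of_pos hγ0, ← Finset.sum_sub_distrib]
    refine mul_le_mul_of_nonneg_left ?_ hγ0.le
    calc |∑ w ∈ W, (p w * L J₁ (x' + w) - p w * L J₂ (x' + w))|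
        ≤ ∑ w ∈ W, |p w * L J₁ (x' + w) - p w * L J₂ (x' + w)| := Finset.abs_sum_le_sum_abs _ _
      _ ≤ ∑ w ∈ W, p w * M := by
          refine Finset.sum_le_sum fun w hw => ?_
          rw [← mul_sub, abs_mul, abs_of_nonneg (hp w hw)]
          exact mul_le_mul_of_nonneg_left (hLM _) (hp w hw)
      _ = M := by rw [← Finset.sum_mul, hpsum, one_mul]
  -- Step 3: inner sup' (over Xd) difference bounded by γM for each y
  have hϕ : ∀ y : EuclideanSpace ℝ (Fin n),
      |Xd.sup' hXd (fun x' => ⟪x', y⟫ - γ * ∑ w ∈ W, p w * L J₁ (x' + w)) -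
       Xd.sup' hXd (fun x' => ⟪x', y⟫ - γ * ∑ w ∈ W, p w * L J₂ (x' + w))| ≤ γ * M := by
    intro y
    refine abs_sup'_sub_sup'_le' _ _ _ _ _ fun x' _ => ?_
    have := hε x'
    calc |(⟪x', y⟫ - γ * ∑ w ∈ W, p w * L J₁ (x' + w)) -
          (⟪x', y⟫ - γ * ∑ w ∈ W, p w * L J₂ (x' + w))|
        = |(γ * ∑ w ∈ W, p w * L J₂ (x' + w)) - γ * ∑ w ∈ W, p w * L J₁ (x' + w)| := by
          ring_nf
      _ ≤ γ * M := by rw [abs_sub_comm]; exact this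
  -- Step 4: h difference bounded by γM for each z
  have hh : ∀ z : {z // z ∈ Z},
      |Y.sup' hY (fun y => ⟪y, (z : EuclideanSpace ℝ (Fin n))⟫ -
          (g y + Xd.sup' hXd (fun x' => ⟪x', y⟫ - γ * ∑ w ∈ W, p w * L J₁ (x' + w)))) -
       Y.sup' hY (fun y => ⟪y, (z : EuclideanSpace ℝ (Fin n))⟫ -
          (g y + Xd.sup' hXd (fun x' => ⟪x', y⟫ - γ * ∑ w ∈ W, p w * L J₂ (x' + w))))|
      ≤ γ * M := by
    intro z
    refine abs_sup'_sub_sup'_le' _ _ _ _ _ fun y _ => ?_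
    have := hϕ y
    rw [abs_sub_comm] at this
    calc |(⟪y, (z : EuclideanSpace ℝ (Fin n))⟫ -
            (g y + Xd.sup' hXd (fun x' => ⟪x', y⟫ - γ * ∑ w ∈ W, p w * L J₁ (x' + w)))) -
          (⟪y, (z : EuclideanSpace ℝ (Fin n))⟫ -
            (g y + Xd.sup' hXd (fun x' => ⟪x', y⟫ - γ * ∑ w ∈ W, p w * L J₂ (x' + w))))|
        = |Xd.sup' hXd (fun x' => ⟪x', y⟫ - γ * ∑ w ∈ W, p w * L J₂ (x' + w)) -
           Xd.sup' hXd (fun x' => ⟪x', y⟫ - γ * ∑ w ∈ W, p w * L J₁ (x' + w))| := by congr 1; ring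
      _ ≤ γ * M := this
  -- Step 5: conclude
  apply Finset.sup'_le
  intro x _
  rw [hT J₁ x, hT J₂ x, add_sub_add_left_eq_sub]
  calc |E _ (fs (x : EuclideanSpace ℝ (Fin n))) - E _ (fs (x : EuclideanSpace ℝ (Fin n)))|
      ≤ Z.attach.sup' (Finset.attach_nonempty_iff.mpr hZ) (fun z' => |_ - _|) := hE _ _ _
    _ ≤ γ * M := Finset.sup'_le _ _ fun z _ => hh z
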